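/- Suppose f is analytic on the unit disk with Re f(z) < 1, coefficients a_n, a_0 \in [0,1), and p \ge 2 is an integer. If \zeta_0(r) \ge \frac{2}{1 + a_0 + \cdots + a_0^{p-1}} \sum_{n=1}^\infty \zeta_n(r) for r \in [0, R_p], then a_0^p \zeta_0(r) + \sum_{n=1}^\infty |a_n| \zeta_n(r) \le \zeta_0(r) for all r \le R_p. -/

import Mathlib

open Metric

open Real intervalIntegral in
lemma exp_int_integral (m : ℤ) :
    (∫ θ in (0:ℝ)..(2*π), Complex.exp ((m:ℂ) * θ * Complex.I)) =
      if m = 0 then ((2*π:ℝ):ℂ) else 0 := by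
  rcases eq_or_ne m 0 with h | h
  · simp [h]
  · have hc : (m:ℂ) * Complex.I ≠ 0 := by
      simp [Complex.ext_iff, h, Complex.I_ne_zero, mul_comm]
    have := integral_exp_mul_complex (a := 0) (b := 2*π) hc
    simp only [if_neg h]
    rw [show (fun θ : ℝ => Complex.exp ((m:ℂ) * θ * Complex.I)) = fun θ : ℝ => Complex.exp (((m:ℂ)*Complex.I) * θ) from funext fun θ => by ring_nf, this]
    have h1 : Complex.exp ((m:ℂ) * Complex.I * ((2*π:ℝ):ℂ)) = 1 := by
      rw [show (m:ℂ) * Complex.I * ((2*π:ℝ):ℂ) = m * (2*π*Complex.I) by push_cast; ring]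
      exact Complex.exp_int_mul_two_pi_mul_I m
    rw [h1]
    simp


open Real in
lemma fourier_tsum (b : ℕ → ℂ) (hb : Summable fun n => ‖b n‖) (m : ℕ → ℤ) (g : ℝ → ℂ)
    (hg : ∀ θ : ℝ, HasSum (fun n => b n * Complex.exp ((m n : ℂ) * θ * Complex.I)) (g θ)) :
    HasSum (fun n => b n * (if m n = 0 then ((2*π:ℝ):ℂ) else 0))
      (∫ θ in (0:ℝ)..(2*π), g θ) := by
  set F : ℕ → C(ℝ, ℂ) := fun n =>
    ⟨fun θ => b n * Complex.exp ((m n : ℂ) * θ * Complex.I), by fun_prop⟩ with hF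
  have hnorm : ∀ n θ, ‖F n θ‖ = ‖b n‖ := by
    intro n θ
    simp only [hF, ContinuousMap.coe_mk, norm_mul]
    rw [show ((m n : ℂ) * θ * Complex.I) = ((m n * θ : ℝ) : ℂ) * Complex.I by push_cast; ring,
      Complex.norm_exp_ofReal_mul_I, mul_one]
  have hsum : Summable fun n =>
      ‖(F n).restrict (⟨Set.uIcc (0:ℝ) (2*π), isCompact_uIcc⟩ : TopologicalSpace.Compacts ℝ)‖ := by
    refine hb.of_nonneg_of_le (fun n => norm_nonneg _) (fun n => ?_)
    refine ContinuousMap.norm_le _ (norm_nonneg _) |>.mpr fun x => ?_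
    simp [hnorm n x, ContinuousMap.restrict_apply]
  have key := intervalIntegral.hasSum_intervalIntegral_of_summable_norm
    (a := 0) (b := 2*π) hsum
  have h1 : ∀ θ : ℝ, ∑' n, F n θ = g θ := fun θ => (hg θ).tsum_eq
  have h2 : ∀ n, (∫ θ in (0:ℝ)..(2*π), F n θ) = b n * (if m n = 0 then ((2*π:ℝ):ℂ) else 0) := by
    intro n
    simp only [hF, ContinuousMap.coe_mk]
    rw [intervalIntegral.integral_const_mul, exp_int_integral]
  simpa only [h2, intervalIntegral.integral_congr (g := g) (fun θ _ => h1 θ)] using key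

open Real Metric Complex in
lemma coeff_bound_r (f : ℂ → ℂ) (a : ℕ → ℂ) (a₀ : ℝ)
    (hsum : ∀ z ∈ ball (0 : ℂ) 1, HasSum (fun n => a n * z ^ n) (f z))
    (hre : ∀ z ∈ ball (0 : ℂ) 1, (f z).re < 1)
    (ha0 : a 0 = (a₀ : ℂ)) (k : ℕ) (hk : 1 ≤ k) (r : ℝ) (hr0 : 0 ≤ r) (hr1 : r < 1) :
    ‖a k‖ * r ^ k ≤ 2 * (1 - a₀) := by
  set z : ℝ → ℂ := fun θ => (r:ℂ) * Complex.exp (θ * Complex.I) with hzdef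
  have hz : ∀ θ : ℝ, z θ ∈ ball (0:ℂ) 1 := by
    intro θ
    simp only [hzdef, mem_ball, dist_zero_right, norm_mul,
      Complex.norm_exp_ofReal_mul_I, mul_one, Complex.norm_real, Real.norm_eq_abs]
    rwa [_root_.abs_of_nonneg hr0]
  set b : ℕ → ℂ := fun n => a n * (r:ℂ) ^ n with hbdef
  have hb : Summable fun n => ‖b n‖ := by
    refine summable_norm_iff.mpr ?_
    have hmem : (r:ℂ) ∈ ball (0:ℂ) 1 := by
      simp only [mem_ball, dist_zero_right, Complex.norm_real, Real.norm_eq_abs]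
      rwa [_root_.abs_of_nonneg hr0]
    exact (hsum _ hmem).summable
  -- z θ ^ n decomposition
  have hpow : ∀ (n : ℕ) (θ : ℝ), z θ ^ n = (r:ℂ)^n * Complex.exp ((n:ℂ) * θ * Complex.I) := by
    intro n θ
    rw [hzdef, mul_pow, ← Complex.exp_nat_mul]
    ring_nf
  -- basic HasSum with exponentials
  have hg0 : ∀ θ : ℝ, HasSum (fun n => b n * Complex.exp (((n:ℤ):ℂ) * θ * Complex.I)) (f (z θ)) := by
    intro θ
    refine (hsum (z θ) (hz θ)).congr_fun fun n => ?_  -- maybe wrong name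
    rw [hpow n θ, hbdef]
    push_cast
    ring
  -- E : the exponential e^{-ik θ}
  set E : ℝ → ℂ := fun θ => Complex.exp (((-(k:ℤ) : ℤ):ℂ) * θ * Complex.I) with hEdef
  -- Integral of f·E
  have hgA : ∀ θ : ℝ, HasSum (fun n => b n * Complex.exp (((((n:ℤ) - (k:ℤ) : ℤ)):ℂ) * θ * Complex.I))
      (f (z θ) * E θ) := by
    intro θ
    refine ((hg0 θ).mul_right (E θ)).congr_fun fun n => ?_
    have harg : (((((n:ℤ) - (k:ℤ) : ℤ)):ℂ)) * θ * Complex.I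
        = ((n:ℤ):ℂ)*θ*Complex.I + ((-(k:ℤ):ℤ):ℂ)*θ*Complex.I := by push_cast; ring
    rw [harg, Complex.exp_add, hEdef]
    ring
  have IA : (∫ θ in (0:ℝ)..(2*π), f (z θ) * E θ) = ((2*π:ℝ):ℂ) * b k := by
    have h1 := fourier_tsum b hb (fun n => (n:ℤ) - (k:ℤ)) (fun θ => f (z θ) * E θ) hgA
    have h2 : HasSum (fun n => b n * (if ((n:ℤ) - (k:ℤ) = 0) then ((2*π:ℝ):ℂ) else 0))
        (((2*π:ℝ):ℂ) * b k) := by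
      have h3 : HasSum (fun n => if n = k then ((2*π:ℝ):ℂ) * b k else 0) (((2*π:ℝ):ℂ) * b k) :=
        hasSum_ite_eq k _
      refine h3.congr_fun fun n => ?_
      rcases eq_or_ne n k with h | h
      · simp [h, mul_comm]
      · simp [h, sub_eq_zero, fun h' => h (Nat.cast_injective h')]
    exact h1.unique h2
  -- Integral of conj f · E
  have hconj : ∀ θ : ℝ, HasSum (fun n => (starRingEnd ℂ) (b n) *
      Complex.exp (((-((n:ℤ) + (k:ℤ)) : ℤ):ℂ) * θ * Complex.I)) ((starRingEnd ℂ) (f (z θ)) * E θ) := by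
    intro θ
    have h1 : HasSum (fun n => (starRingEnd ℂ) (a n * z θ ^ n)) ((starRingEnd ℂ) (f (z θ))) :=
      (hsum (z θ) (hz θ)).mapL (Complex.conjCLE : ℂ →L[ℝ] ℂ)
    refine (h1.mul_right (E θ)).congr_fun fun n => ?_
    rw [hpow n θ]
    have hce : (starRingEnd ℂ) (Complex.exp ((n:ℂ)*θ*Complex.I))
        = Complex.exp (-((n:ℂ)*θ*Complex.I)) := by
      rw [← Complex.exp_conj]
      congr 1
      simp [Complex.ext_iff]
    simp only [hbdef, map_mul, map_pow, Complex.conj_ofReal, hce, hEdef]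
    have harg : ((-((n:ℤ) + (k:ℤ)) : ℤ):ℂ) * θ * Complex.I
        = -((n:ℂ) * θ * Complex.I) + ((-(k:ℤ):ℤ):ℂ)*θ*Complex.I := by push_cast; ring
    rw [harg, Complex.exp_add]
    ring
  have IB : (∫ θ in (0:ℝ)..(2*π), (starRingEnd ℂ) (f (z θ)) * E θ) = 0 := by
    have hb' : Summable fun n => ‖(starRingEnd ℂ) (b n)‖ := by simpa using hb
    have h1 := fourier_tsum _ hb' (fun n => -((n:ℤ) + (k:ℤ)))
      (fun θ => (starRingEnd ℂ) (f (z θ)) * E θ) hconj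
    have h2 : ∀ n : ℕ, (starRingEnd ℂ) (b n) *
        (if (-((n:ℤ) + (k:ℤ)) = 0) then ((2*π:ℝ):ℂ) else 0) = 0 := by
      intro n
      have : ¬(-((n:ℤ) + (k:ℤ)) = 0) := by omega
      rw [if_neg this, mul_zero]
    rw [show (fun n : ℕ => (starRingEnd ℂ) (b n) *
        (if (-((n:ℤ) + (k:ℤ)) = 0) then ((2*π:ℝ):ℂ) else 0)) = fun _ => (0:ℂ) from funext h2] at h1
    exact h1.unique hasSum_zero
  -- Integral of E alone
  have IE : (∫ θ in (0:ℝ)..(2*π), E θ) = 0 := by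
    rw [hEdef, exp_int_integral (-(k:ℤ))]
    have : ¬(-(k:ℤ) = 0) := by omega
    simp [this]
  -- Integral of f alone
  have I0 : (∫ θ in (0:ℝ)..(2*π), f (z θ)) = ((2*π:ℝ):ℂ) * (a₀:ℂ) := by
    have h1 := fourier_tsum b hb (fun n => (n:ℤ)) (fun θ => f (z θ)) (by
      intro θ
      exact (hg0 θ).congr_fun fun n => rfl)
    have h2 : HasSum (fun n => b n * (if ((n:ℤ) = 0) then ((2*π:ℝ):ℂ) else 0))
        (((2*π:ℝ):ℂ) * (a₀:ℂ)) := by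
      have h3 : HasSum (fun n => if n = 0 then ((2*π:ℝ):ℂ) * (a₀:ℂ) else 0)
          (((2*π:ℝ):ℂ) * (a₀:ℂ)) := hasSum_ite_eq 0 _
      refine h3.congr_fun fun n => ?_
      rcases eq_or_ne n 0 with h | h
      · simp [h, hbdef, ha0, mul_comm]
      · have : ¬((n:ℤ) = 0) := by omega
        simp [h, this]
    exact h1.unique h2
  -- continuity of θ ↦ f (z θ)
  have hcont : Continuous fun θ : ℝ => f (z θ) := by
    have h1 : Continuous fun θ : ℝ => ∑' n, b n * Complex.exp (((n:ℤ):ℂ) * θ * Complex.I) := by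
      refine continuous_tsum (fun n => by fun_prop) hb (fun n θ => ?_)
      rw [norm_mul, show (((n:ℤ):ℂ) * θ * Complex.I) = ((((n:ℤ):ℝ) * θ : ℝ):ℂ) * Complex.I by
        push_cast; ring, Complex.norm_exp_ofReal_mul_I,
        mul_one]
    exact h1.congr fun θ => (hg0 θ).tsum_eq
  -- u = 1 - Re f ≥ 0
  set u : ℝ → ℝ := fun θ => 1 - (f (z θ)).re with hudef
  have hu0 : ∀ θ, 0 ≤ u θ := fun θ => by
    have := hre (z θ) (hz θ); simp only [hudef]; linarith
  have hucont : Continuous u := continuous_const.sub (Complex.continuous_re.comp hcont)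
  have hEcont : Continuous E := by
    rw [hEdef]; fun_prop
  have hfEcont : Continuous fun θ => f (z θ) * E θ := hcont.mul hEcont
  have hcfEcont : Continuous fun θ => (starRingEnd ℂ) (f (z θ)) * E θ :=
    (continuous_star.comp hcont).mul hEcont
  have hEnorm : ∀ θ : ℝ, ‖E θ‖ = 1 := by
    intro θ
    simp only [hEdef]
    rw [show (((-(k:ℤ):ℤ)):ℂ) * θ * Complex.I
      = ((((-(k:ℤ):ℤ)):ℝ) * θ : ℝ) * Complex.I by push_cast; ring,
      Complex.norm_exp_ofReal_mul_I]
  have hptwise : ∀ θ : ℝ, ((u θ : ℝ):ℂ) * E θ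
      = E θ - (f (z θ) * E θ)/2 - ((starRingEnd ℂ) (f (z θ)) * E θ)/2 := by
    intro θ
    have h2 : (((f (z θ)).re : ℝ) : ℂ) = (f (z θ) + (starRingEnd ℂ) (f (z θ)))/2 := by
      rw [Complex.add_conj]; push_cast; ring
    simp only [hudef]
    push_cast
    rw [h2]
    ring
  have i1 : IntervalIntegrable E MeasureTheory.volume 0 (2*π) := hEcont.intervalIntegrable _ _
  have i2 : IntervalIntegrable (fun θ => f (z θ) * E θ / 2) MeasureTheory.volume 0 (2*π) :=
    (hfEcont.div_const 2).intervalIntegrable _ _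
  have i3 : IntervalIntegrable (fun θ => (starRingEnd ℂ) (f (z θ)) * E θ / 2)
      MeasureTheory.volume 0 (2*π) := (hcfEcont.div_const 2).intervalIntegrable _ _
  have hJ : (∫ θ in (0:ℝ)..(2*π), ((u θ : ℝ):ℂ) * E θ) = -((π:ℝ) * b k) := by
    rw [intervalIntegral.integral_congr (g := fun θ =>
      E θ - f (z θ) * E θ / 2 - (starRingEnd ℂ) (f (z θ)) * E θ / 2) (fun θ _ => hptwise θ),
      intervalIntegral.integral_sub (i1.sub i2) i3, intervalIntegral.integral_sub i1 i2,
      intervalIntegral.integral_div, intervalIntegral.integral_div, IA, IB, IE]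
    push_cast
    ring
  have hnormle : ‖∫ θ in (0:ℝ)..(2*π), ((u θ : ℝ):ℂ) * E θ‖ ≤ ∫ θ in (0:ℝ)..(2*π), u θ := by
    refine (intervalIntegral.norm_integral_le_integral_norm (by positivity)).trans_eq ?_
    refine intervalIntegral.integral_congr fun θ _ => ?_
    rw [norm_mul, hEnorm θ, mul_one, Complex.norm_real, Real.norm_eq_abs,
      _root_.abs_of_nonneg (hu0 θ)]
  have hIu : (∫ θ in (0:ℝ)..(2*π), u θ) = 2*π*(1 - a₀) := by
    have hint : IntervalIntegrable (fun θ => f (z θ)) MeasureTheory.volume 0 (2*π) :=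
      hcont.intervalIntegrable _ _
    have h1 : (∫ θ in (0:ℝ)..(2*π), (f (z θ)).re) = 2*π*a₀ := by
      have h2 := Complex.reCLM.intervalIntegral_comp_comm hint
      simp only [Complex.reCLM_apply] at h2
      rw [h2, I0]
      simp [Complex.ofReal_mul]
    have hint2 : IntervalIntegrable (fun θ => (f (z θ)).re) MeasureTheory.volume 0 (2*π) :=
      Continuous.intervalIntegrable (by exact Complex.continuous_re.comp hcont) _ _
    rw [show (∫ θ in (0:ℝ)..(2*π), u θ)
        = ∫ θ in (0:ℝ)..(2*π), ((1:ℝ) - (f (z θ)).re) from rfl,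
      intervalIntegral.integral_sub intervalIntegrable_const hint2, h1]
    simp
    ring
  -- conclude
  have hfin : π * (‖a k‖ * r ^ k) ≤ π * (2 * (1 - a₀)) := by
    have h1 : ‖-((π:ℝ) * b k : ℂ)‖ = π * (‖a k‖ * r ^ k) := by
      rw [norm_neg, norm_mul, hbdef]
      simp only [Complex.norm_real, Real.norm_eq_abs, _root_.abs_of_nonneg Real.pi_pos.le,
        norm_mul, norm_pow, Complex.norm_real,
        _root_.abs_of_nonneg hr0]
    calc π * (‖a k‖ * r ^ k) = ‖-((π:ℝ) * b k : ℂ)‖ := h1.symm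
      _ = ‖∫ θ in (0:ℝ)..(2*π), ((u θ : ℝ):ℂ) * E θ‖ := by rw [hJ]
      _ ≤ ∫ θ in (0:ℝ)..(2*π), u θ := hnormle
      _ = 2*π*(1 - a₀) := hIu
      _ = π * (2 * (1 - a₀)) := by ring
  exact le_of_mul_le_mul_left hfin Real.pi_pos

open Metric in
lemma coeff_bound (f : ℂ → ℂ) (a : ℕ → ℂ) (a₀ : ℝ)
    (hsum : ∀ z ∈ ball (0 : ℂ) 1, HasSum (fun n => a n * z ^ n) (f z))
    (hre : ∀ z ∈ ball (0 : ℂ) 1, (f z).re < 1)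
    (ha0 : a 0 = (a₀ : ℂ)) (k : ℕ) (hk : 1 ≤ k) :
    ‖a k‖ ≤ 2 * (1 - a₀) := by
  have ht : Filter.Tendsto (fun r : ℝ => ‖a k‖ * r ^ k)
      (nhdsWithin 1 (Set.Iio 1)) (nhds (‖a k‖)) := by
    have h1 := (continuous_const.mul (continuous_pow k)).tendsto (1:ℝ)
      (f := fun r : ℝ => ‖a k‖ * r ^ k)
    simpa using h1.mono_left nhdsWithin_le_nhds
  refine le_of_tendsto ht ?_
  filter_upwards [Ioo_mem_nhdsLT_of_mem
    (by constructor <;> norm_num : (1:ℝ) ∈ Set.Ioc 0 1)] with r hr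
  exact coeff_bound_r f a a₀ hsum hre ha0 k hk r hr.1.le hr.2

/-- Theorem 1(ii): weighted Bohr inequality for `Re f < 1` and integer `p ≥ 2`. -/
theorem bohr_weighted_P_int (f : ℂ → ℂ) (a : ℕ → ℂ) (a₀ : ℝ) (p : ℕ) (ζ : ℕ → ℝ → ℝ) (Rp : ℝ)
    (hsum : ∀ z ∈ ball (0 : ℂ) 1, HasSum (fun n => a n * z ^ n) (f z))
    (hre : ∀ z ∈ ball (0 : ℂ) 1, (f z).re < 1)
    (ha0 : a 0 = (a₀ : ℂ)) (h0 : 0 ≤ a₀) (h1 : a₀ < 1)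
    (hp : 2 ≤ p)
    (hζnn : ∀ n, ∀ r ∈ Set.Ico (0 : ℝ) 1, 0 ≤ ζ n r)
    (hζc : ∀ n, ContinuousOn (ζ n) (Set.Ico 0 1))
    (hζs : ∀ r ∈ Set.Ico (0 : ℝ) 1, Summable fun n => ζ n r)
    (hR : Rp ∈ Set.Ico (0 : ℝ) 1)
    (hmaj : ∀ r ∈ Set.Icc (0 : ℝ) Rp,
      (2 / ∑ i ∈ Finset.range p, a₀ ^ i) * ∑' n : ℕ, ζ (n + 1) r ≤ ζ 0 r) :
    ∀ r ∈ Set.Icc (0 : ℝ) Rp,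
      a₀ ^ p * ζ 0 r + ∑' n : ℕ, ‖a (n + 1)‖ * ζ (n + 1) r ≤ ζ 0 r := by
  intro r hr
  have hr01 : r ∈ Set.Ico (0:ℝ) 1 := ⟨hr.1, lt_of_le_of_lt hr.2 hR.2⟩
  set S : ℝ := ∑ i ∈ Finset.range p, a₀ ^ i with hSdef
  have hS1 : 1 ≤ S := by
    have := Finset.single_le_sum (f := fun i => a₀ ^ i)
      (fun i _ => pow_nonneg h0 i) (Finset.mem_range.mpr (show 0 < p by omega))
    simpa using this
  have hSpos : 0 < S := lt_of_lt_of_le one_pos hS1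
  set T : ℝ := ∑' n : ℕ, ζ (n + 1) r with hTdef
  have hζ0 : 0 ≤ ζ 0 r := hζnn 0 r hr01
  have hTsum : Summable fun n => ζ (n + 1) r := (summable_nat_add_iff 1).mpr (hζs r hr01)
  have hbound : ∀ n : ℕ, ‖a (n + 1)‖ * ζ (n + 1) r
      ≤ (2 * (1 - a₀)) * ζ (n + 1) r := fun n =>
    mul_le_mul_of_nonneg_right
      (coeff_bound f a a₀ hsum hre ha0 (n + 1) (by omega)) (hζnn (n+1) r hr01)
  have hsummable : Summable fun n => ‖a (n + 1)‖ * ζ (n + 1) r :=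
    Summable.of_nonneg_of_le
      (fun n => mul_nonneg (norm_nonneg _) (hζnn (n+1) r hr01)) hbound
      (hTsum.mul_left _)
  have htsum_le : (∑' n : ℕ, ‖a (n + 1)‖ * ζ (n + 1) r) ≤ 2 * (1 - a₀) * T := by
    rw [hTdef, ← tsum_mul_left]
    exact Summable.tsum_le_tsum hbound hsummable (hTsum.mul_left _)
  have h2T : 2 * T ≤ S * ζ 0 r := by
    have hm := hmaj r hr
    rw [div_mul_eq_mul_div, div_le_iff₀ hSpos] at hm
    linarith
  have hgeom : (1 - a₀) * S = 1 - a₀ ^ p := by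
    have := geom_sum_mul a₀ p
    rw [hSdef]
    linear_combination (-1 : ℝ) * this
  have hT0 : 0 ≤ T := tsum_nonneg fun n => hζnn (n+1) r hr01
  have h3 : 2 * (1 - a₀) * T ≤ (1 - a₀ ^ p) * ζ 0 r := by
    calc 2 * (1 - a₀) * T = (1 - a₀) * (2 * T) := by ring
      _ ≤ (1 - a₀) * (S * ζ 0 r) := mul_le_mul_of_nonneg_left h2T (by linarith)
      _ = (1 - a₀ ^ p) * ζ 0 r := by rw [← hgeom]; ring
  linarith
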